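/- Let V be a real inner product space with a symmetric positive semidefinite bilinear form a. For any u^{n+1}, u^n, u^{n-1} in V satisfying the explicit scheme (u^{n+1} - 2u^n + u^{n-1}, v) + τ² a(u^n, v) = 0 for all v in V, the modified discrete energy E^{n+1/2} = ‖(u^{n+1}-u^n)/τ‖² - (τ²/4)‖(u^{n+1}-u^n)/τ‖_a² + ‖(u^{n+1}+u^n)/2‖_a² equals E^{n-1/2} (the same expression with indices shifted down by one). -/

import Mathlib

open RealInnerProductSpace

theorem stmt1 {V : Type*} [NormedAddCommGroup V] [InnerProductSpace ℝ V]
    (a : V →ₗ[ℝ] V →ₗ[ℝ] ℝ) (hsymm : ∀ x y, a x y = a y x) (hpsd : ∀ x, 0 ≤ a x x)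
    (τ : ℝ) (hτ : 0 < τ) (u0 u1 u2 : V)
    (hscheme : ∀ v : V,
      ⟪u2 - (2:ℝ) • u1 + u0, v⟫ + τ^2 * a u1 v = 0) :
    ‖(1/τ) • (u2 - u1)‖^2 - (τ^2 / 4) * a ((1/τ) • (u2 - u1)) ((1/τ) • (u2 - u1))
        + a ((1/2 : ℝ) • (u2 + u1)) ((1/2 : ℝ) • (u2 + u1))
      = ‖(1/τ) • (u1 - u0)‖^2 - (τ^2 / 4) * a ((1/τ) • (u1 - u0)) ((1/τ) • (u1 - u0))
        + a ((1/2 : ℝ) • (u1 + u0)) ((1/2 : ℝ) • (u1 + u0)) := by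
  have h := hscheme (u2 - u0)
  have hτ' : τ ≠ 0 := ne_of_gt hτ
  have e1 : ‖(1/τ) • (u2 - u1)‖^2 = (1/τ)^2 * ⟪u2 - u1, u2 - u1⟫ := by
    rw [norm_smul, mul_pow, real_inner_self_eq_norm_sq]
    simp [sq_abs]
  have e2 : ‖(1/τ) • (u1 - u0)‖^2 = (1/τ)^2 * ⟪u1 - u0, u1 - u0⟫ := by
    rw [norm_smul, mul_pow, real_inner_self_eq_norm_sq]
    simp [sq_abs]
  rw [e1, e2]
  simp only [inner_sub_left, inner_sub_right, inner_add_left, inner_add_right,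
    inner_smul_left, inner_smul_right, map_sub, map_add, map_smul,
    LinearMap.sub_apply, LinearMap.add_apply, LinearMap.smul_apply,
    smul_eq_mul, RCLike.conj_to_real] at h ⊢
  simp only [hsymm u1 u0, hsymm u2 u0, hsymm u2 u1,
    real_inner_comm u0 u1, real_inner_comm u0 u2, real_inner_comm u1 u2] at h ⊢
  field_simp
  linear_combination (16 : ℝ) * h
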